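/- Let A be an N×N Hermitian positive definite complex matrix and B_1, …, B_n be N×N Hermitian positive semidefinite complex matrices, and for x ∈ ℝⁿ with x_i ≥ 0 for all i let Σ(x) = (A + Σ_{i=1}^n x_i B_i)⁻¹ and f_E(x) = λ_max(Σ(x)), the largest eigenvalue of Σ(x). Let x̃ be a point with x̃_i ≥ 0 for all i and let ũ ∈ ℂᴺ be a unit eigenvector of Σ(x̃) corresponding to λ_max(Σ(x̃)). Define g ∈ ℝⁿ by g_i = −ũ^H Σ(x̃) B_i Σ(x̃) ũ. Then g is a subgradient of f_E at x̃ over the nonnegative orthant: f_E(x) ≥ f_E(x̃) + ⟨g, x − x̃⟩ for all x with x_i ≥ 0 for all i. -/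

import Mathlib

open Matrix ComplexOrder in
private lemma smul_psd {N : ℕ} {B : Matrix (Fin N) (Fin N) ℂ} (hB : B.PosSemidef) {c : ℝ}
    (hc : 0 ≤ c) : (c • B).PosSemidef := by
  constructor
  · show _ = _
    rw [Matrix.conjTranspose_smul]
    simp [hB.1.eq]
  · intro v
    exact (hB.smul hc).2 v

open Matrix ComplexOrder in
private lemma rayleigh_bdd {N : ℕ} (T : Matrix (Fin N) (Fin N) ℂ) :
    BddAbove (Set.range fun u : {u : Fin N → ℂ // ∑ j, Complex.normSq (u j) = 1} =>
      (star (u : Fin N → ℂ) ⬝ᵥ T.mulVec (u : Fin N → ℂ)).re) := by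
  refine ⟨∑ j, ∑ k, ‖T j k‖, ?_⟩
  rintro r ⟨⟨u, hu⟩, rfl⟩
  have habs : ∀ j, ‖u j‖ ≤ 1 := by
    intro j
    have h1 : Complex.normSq (u j) ≤ 1 := by
      rw [← hu]
      exact Finset.single_le_sum (fun k _ => Complex.normSq_nonneg (u k)) (Finset.mem_univ j)
    rw [Complex.normSq_eq_norm_sq] at h1
    nlinarith [norm_nonneg (u j)]
  calc (star u ⬝ᵥ T.mulVec u).re ≤ ‖star u ⬝ᵥ T.mulVec u‖ := Complex.re_le_norm _
    _ ≤ ∑ j, ‖star u j * T.mulVec u j‖ := norm_sum_le _ _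
    _ ≤ ∑ j, ∑ k, ‖T j k‖ := by
        refine Finset.sum_le_sum fun j _ => ?_
        rw [norm_mul]
        calc ‖star u j‖ * ‖T.mulVec u j‖
            ≤ 1 * ‖T.mulVec u j‖ := by
              refine mul_le_mul_of_nonneg_right ?_ (norm_nonneg _)
              simpa using habs j
          _ = ‖∑ k, T j k * u k‖ := by rw [one_mul]; rfl
          _ ≤ ∑ k, ‖T j k * u k‖ := norm_sum_le _ _
          _ ≤ ∑ k, ‖T j k‖ := by
              refine Finset.sum_le_sum fun k _ => ?_
              rw [norm_mul]
              nlinarith [norm_nonneg (T j k), norm_nonneg (u k), habs k]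

open Matrix ComplexOrder in
theorem lambdaMax_subgradient (N n : ℕ)
    (A : Matrix (Fin N) (Fin N) ℂ) (hA : A.PosDef)
    (B : Fin n → Matrix (Fin N) (Fin N) ℂ) (hB : ∀ i, (B i).PosSemidef)
    (fE : (Fin n → ℝ) → ℝ)
    (hfE : ∀ x : Fin n → ℝ, fE x =
      ⨆ u : {u : Fin N → ℂ // ∑ j, Complex.normSq (u j) = 1},
        (star (u : Fin N → ℂ) ⬝ᵥ
          ((A + ∑ i, x i • B i)⁻¹).mulVec (u : Fin N → ℂ)).re)
    (xt : Fin n → ℝ) (hxt : ∀ i, 0 ≤ xt i)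
    (ut : Fin N → ℂ) (hut : ∑ j, Complex.normSq (ut j) = 1)
    (heig : ((A + ∑ j, xt j • B j)⁻¹).mulVec ut = (fE xt : ℂ) • ut)
    (g : Fin n → ℝ)
    (hg : ∀ i, g i =
      -(star ut ⬝ᵥ
          ((A + ∑ j, xt j • B j)⁻¹ * B i * (A + ∑ j, xt j • B j)⁻¹).mulVec ut).re) :
    ∀ x : Fin n → ℝ, (∀ i, 0 ≤ x i) →
      fE xt + ∑ i, g i * (x i - xt i) ≤ fE x := by
  intro x hx
  have hpd : ∀ y : Fin n → ℝ, (∀ i, 0 ≤ y i) → (A + ∑ i, y i • B i).PosDef := by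
    intro y hy
    refine hA.add_posSemidef ?_
    refine Finset.sum_induction _ _ (fun a b ha hb => ha.add hb) Matrix.PosSemidef.zero ?_
    exact fun i _ => smul_psd (hB i) (hy i)
  have hpd0 := hpd xt hxt
  have hpd1 := hpd x hx
  set M0 : Matrix (Fin N) (Fin N) ℂ := A + ∑ j, xt j • B j with hM0
  set M1 : Matrix (Fin N) (Fin N) ℂ := A + ∑ j, x j • B j with hM1
  set S0 : Matrix (Fin N) (Fin N) ℂ := M0⁻¹ with hS0
  set S1 : Matrix (Fin N) (Fin N) ℂ := M1⁻¹ with hS1d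
  have hdet0 : IsUnit M0.det := (Matrix.isUnit_iff_isUnit_det _).1 hpd0.isUnit
  have hdet1 : IsUnit M1.det := (Matrix.isUnit_iff_isUnit_det _).1 hpd1.isUnit
  have e00 : M0 * S0 = 1 := Matrix.mul_nonsing_inv _ hdet0
  have e00' : S0 * M0 = 1 := Matrix.nonsing_inv_mul _ hdet0
  have e11 : M1 * S1 = 1 := Matrix.mul_nonsing_inv _ hdet1
  have e11' : S1 * M1 = 1 := Matrix.nonsing_inv_mul _ hdet1
  set D : Matrix (Fin N) (Fin N) ℂ := ∑ i, (x i - xt i) • B i with hD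
  have hMD : M1 - M0 = D := by
    simp only [hM0, hM1, hD, sub_smul]
    rw [add_sub_add_left_eq_sub, ← Finset.sum_sub_distrib]
  -- resolvent identities
  have hid1 : S1 * (D * S0) = S0 - S1 := by
    rw [← hMD, Matrix.sub_mul, Matrix.mul_sub, e00, ← Matrix.mul_assoc, e11']
    simp
  have hid2 : S0 * (D * S1) = S0 - S1 := by
    rw [← hMD, Matrix.sub_mul, Matrix.mul_sub, e11, ← Matrix.mul_assoc, e00']
    simp
  have key : S0 * D * S1 * D * S0 = S1 - S0 + S0 * D * S0 := by
    calc S0 * D * S1 * D * S0 = S0 * (D * (S1 * (D * S0))) := by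
          simp only [Matrix.mul_assoc]
      _ = S0 * (D * S0) - S0 * (D * S1) := by rw [hid1, Matrix.mul_sub, Matrix.mul_sub]
      _ = S0 * D * S0 - (S0 - S1) := by rw [hid2, Matrix.mul_assoc]
      _ = S1 - S0 + S0 * D * S0 := by abel
  have hDH : Dᴴ = D := by
    rw [hD, Matrix.conjTranspose_sum]
    refine Finset.sum_congr rfl fun i _ => ?_
    rw [Matrix.conjTranspose_smul]
    simp [(hB i).1.eq]
  have hpos : 0 ≤ (star ut ⬝ᵥ (S0 * D * S1 * D * S0).mulVec ut).re := by
    have hps : ((D * S0)ᴴ * S1 * (D * S0)).PosSemidef :=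
      hpd1.inv.posSemidef.conjTranspose_mul_mul_same (D * S0)
    have he : (D * S0)ᴴ * S1 * (D * S0) = S0 * D * S1 * D * S0 := by
      rw [Matrix.conjTranspose_mul, hDH, hpd0.inv.isHermitian.eq]
      simp only [Matrix.mul_assoc]
      rfl
    rw [← he]
    exact hps.re_dotProduct_nonneg ut
  -- the additive map P ↦ Re ⟨ut, P ut⟩
  set F : Matrix (Fin N) (Fin N) ℂ →+ ℝ :=
    { toFun := fun P => (star ut ⬝ᵥ P.mulVec ut).re
      map_zero' := by simp
      map_add' := fun P Q => by
        simp [Matrix.add_mulVec, dotProduct_add] } with hF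
  have hFsmul : ∀ (c : ℝ) (P : Matrix (Fin N) (Fin N) ℂ), F (c • P) = c * F P := by
    intro c P
    simp only [hF, AddMonoidHom.coe_mk, ZeroHom.coe_mk, Matrix.smul_mulVec,
      dotProduct_smul, Complex.real_smul, Complex.mul_re, Complex.ofReal_re,
      Complex.ofReal_im]
    ring
  -- value at xt
  have hval0 : F S0 = fE xt := by
    show (star ut ⬝ᵥ S0.mulVec ut).re = fE xt
    rw [hS0, heig, dotProduct_smul, smul_eq_mul]
    have hone : star ut ⬝ᵥ ut = (1 : ℂ) := by
      have : star ut ⬝ᵥ ut = ∑ j, (Complex.normSq (ut j) : ℂ) := by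
        simp [dotProduct, Complex.normSq_eq_conj_mul_self, Complex.star_def]
      rw [this]
      norm_cast
    rw [hone, mul_one, Complex.ofReal_re]
  -- gradient term
  have hgrad : F (S0 * D * S0) = -∑ i, g i * (x i - xt i) := by
    have hexp : S0 * D * S0 = ∑ i, (x i - xt i) • (S0 * B i * S0) := by
      rw [hD, Finset.mul_sum, Finset.sum_mul]
      refine Finset.sum_congr rfl fun i _ => ?_
      rw [Matrix.mul_smul, Matrix.smul_mul]
    rw [hexp, map_sum, ← Finset.sum_neg_distrib]
    refine Finset.sum_congr rfl fun i _ => ?_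
    rw [hFsmul]
    have : F (S0 * B i * S0) = -g i := by rw [hg i]; ring_nf; rfl
    rw [this]; ring
  -- sup bound
  have hle : F S1 ≤ fE x := by
    rw [hfE x]
    exact le_ciSup (rayleigh_bdd ((A + ∑ i, x i • B i)⁻¹)) ⟨ut, hut⟩
  -- combine
  have hpos' : 0 ≤ F S1 - F S0 + F (S0 * D * S0) := by
    have : F (S0 * D * S1 * D * S0) = F S1 - F S0 + F (S0 * D * S0) := by
      rw [key, map_add, map_sub]
    rw [← this]
    exact hpos
  rw [hgrad] at hpos'
  linarith
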